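/- arXiv:2511.18021 — 2 statements merged into one kernel-verified Lean document; each statement's English description precedes it below -/
import Mathlib

section
/- The decoherence-free algebra of a unital completely positive map Φ is the largest Φ-invariant C*-subalgebra M of B(H) such that each restriction Φⁿ|_M is a *-homomorphism: if M is a Φ-invariant *-subalgebra and Φⁿ restricted to M is multiplicative for all n, then M ⊆ N. -/
open Matrix
open scoped ComplexOrder

abbrev MatC (n : ℕ) := Matrix (Fin n) (Fin n) ℂ

/-- Complete positivity of a linear map on matrices: every matrix amplification
preserves positive semidefiniteness. -/
def IsCompletelyPositive {n : ℕ} (Φ : Module.End ℂ (MatC n)) : Prop :=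
  ∀ (k : ℕ) (M : Matrix (Fin n × Fin k) (Fin n × Fin k) ℂ), M.PosSemidef →
    (Matrix.of fun p q : Fin n × Fin k =>
      Φ (Matrix.of fun i j => M (i, p.2) (j, q.2)) p.1 q.1).PosSemidef

/-- The decoherence-free algebra of Φ. -/
def decFree {n : ℕ} (Φ : Module.End ℂ (MatC n)) : Set (MatC n) :=
  {X | ∀ (m : ℕ) (Y : MatC n), (Φ ^ m) (Y * X) = (Φ ^ m) Y * (Φ ^ m) X ∧
        (Φ ^ m) (X * Y) = (Φ ^ m) X * (Φ ^ m) Y}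

section Auxiliary

variable {n : ℕ}

/-- 2×2 block matrix of n×n matrices, as a matrix on `Fin n × Fin 2`. -/
def blk (A B C D : MatC n) : Matrix (Fin n × Fin 2) (Fin n × Fin 2) ℂ :=
  Matrix.of fun p q => ![![A, B], ![C, D]] p.2 q.2 p.1 q.1

/-- Pairing of two vectors into a vector on `Fin n × Fin 2`. -/
def pairVec (v₀ v₁ : Fin n → ℂ) : Fin n × Fin 2 → ℂ := fun p => ![v₀, v₁] p.2 p.1

lemma amp2_blk (Φ : Module.End ℂ (MatC n)) (A B C D : MatC n) :
    (Matrix.of fun p q : Fin n × Fin 2 =>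
      Φ (Matrix.of fun i j => blk A B C D (i, p.2) (j, q.2)) p.1 q.1)
    = blk (Φ A) (Φ B) (Φ C) (Φ D) := by
  ext ⟨i, s⟩ ⟨j, t⟩; fin_cases s <;> fin_cases t <;> rfl

lemma blk_conjTranspose (A B C D : MatC n) :
    (blk A B C D)ᴴ = blk Aᴴ Cᴴ Bᴴ Dᴴ := by
  ext ⟨i, s⟩ ⟨j, t⟩; fin_cases s <;> fin_cases t <;> rfl

lemma blk_mul (A B C D A' B' C' D' : MatC n) :
    blk A B C D * blk A' B' C' D'
      = blk (A*A'+B*C') (A*B'+B*D') (C*A'+D*C') (C*B'+D*D') := by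
  ext ⟨i, s⟩ ⟨j, t⟩
  fin_cases s <;> fin_cases t <;>
    simp [blk, Matrix.mul_apply, Fintype.sum_prod_type, Fin.sum_univ_two,
      Finset.sum_add_distrib]

lemma blk_quad (A B C D : MatC n) (v₀ v₁ : Fin n → ℂ) :
    star (pairVec v₀ v₁) ⬝ᵥ (blk A B C D *ᵥ pairVec v₀ v₁)
      = star v₀ ⬝ᵥ (A *ᵥ v₀) + star v₀ ⬝ᵥ (B *ᵥ v₁)
        + star v₁ ⬝ᵥ (C *ᵥ v₀) + star v₁ ⬝ᵥ (D *ᵥ v₁) := by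
  simp [dotProduct, Matrix.mulVec, pairVec, blk, Fintype.sum_prod_type,
    Fin.sum_univ_two, Finset.sum_add_distrib, mul_add, Finset.mul_sum]
  ring_nf

/-- A completely positive map is star (adjoint) preserving. -/
lemma star_pres (Φ : Module.End ℂ (MatC n)) (hCP : IsCompletelyPositive Φ)
    (Z : MatC n) : Φ Zᴴ = (Φ Z)ᴴ := by
  have h1 : (blk (1:MatC n) Zᴴ Z (Z*Zᴴ)).PosSemidef := by
    have e : blk (1:MatC n) Zᴴ Z (Z*Zᴴ) = (blk 1 Zᴴ 0 0)ᴴ * blk 1 Zᴴ 0 0 := by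
      rw [blk_conjTranspose, blk_mul]; simp
    rw [e]; exact Matrix.posSemidef_conjTranspose_mul_self _
  have h2 := hCP 2 _ h1
  rw [amp2_blk] at h2
  have h3 := h2.isHermitian
  ext i j
  have h4 := congrFun (congrFun h3 (i, (0 : Fin 2))) (j, (1 : Fin 2))
  simpa [blk, Matrix.conjTranspose_apply] using h4.symm

/-- Kadison–Schwarz inequality (quadratic-form version) for unital CP maps. -/
lemma ks (Φ : Module.End ℂ (MatC n)) (hCP : IsCompletelyPositive Φ)
    (hunit : Φ 1 = 1) (Z : MatC n) (v : Fin n → ℂ) :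
    0 ≤ star v ⬝ᵥ ((Φ (Zᴴ * Z) - (Φ Z)ᴴ * Φ Z) *ᵥ v) := by
  have h1 : (blk (Zᴴ*Z) Zᴴ Z (1:MatC n)).PosSemidef := by
    have e : blk (Zᴴ*Z) Zᴴ Z (1:MatC n) = (blk Z 1 0 0)ᴴ * blk Z 1 0 0 := by
      rw [blk_conjTranspose, blk_mul]; simp
    rw [e]; exact Matrix.posSemidef_conjTranspose_mul_self _
  have h2 := hCP 2 _ h1
  rw [amp2_blk, hunit, star_pres Φ hCP Z] at h2
  have h5 := h2.dotProduct_mulVec_nonneg (pairVec v (-(Φ Z *ᵥ v)))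
  rw [blk_quad] at h5
  have e2 : star (-(Φ Z *ᵥ v)) ⬝ᵥ (Φ Z *ᵥ v) = -(star v ⬝ᵥ (((Φ Z)ᴴ * Φ Z) *ᵥ v)) := by
    rw [star_neg, neg_dotProduct, Matrix.star_mulVec, Matrix.dotProduct_mulVec,
      Matrix.vecMul_vecMul]
    rw [Matrix.dotProduct_mulVec]
  have e3 : star (-(Φ Z *ᵥ v)) ⬝ᵥ ((1 : MatC n) *ᵥ -(Φ Z *ᵥ v))
      = star v ⬝ᵥ (((Φ Z)ᴴ * Φ Z) *ᵥ v) := by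
    rw [Matrix.one_mulVec, star_neg, neg_dotProduct, dotProduct_neg, neg_neg,
      Matrix.star_mulVec, Matrix.dotProduct_mulVec, Matrix.vecMul_vecMul,
      ← Matrix.dotProduct_mulVec]
  have e1 : star v ⬝ᵥ ((Φ Z)ᴴ *ᵥ -(Φ Z *ᵥ v)) = -(star v ⬝ᵥ (((Φ Z)ᴴ * Φ Z) *ᵥ v)) := by
    rw [Matrix.mulVec_neg, dotProduct_neg, Matrix.mulVec_mulVec]
  rw [e1, e2, e3] at h5
  rw [Matrix.sub_mulVec, dotProduct_sub]
  convert h5 using 1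
  ring

lemma real_line_zero (a c : ℂ) (h : ∀ r : ℝ, 0 ≤ a + (r : ℂ) * c) : c = 0 := by
  have him : ∀ r : ℝ, (a + (r:ℂ) * c).im = 0 := fun r => ((Complex.le_def.mp (h r)).2).symm
  have h0 := him 0
  have h1 := him 1
  simp [Complex.add_im, Complex.mul_im] at h0 h1
  have hcim : c.im = 0 := by linarith [h1, h0]
  have hre : ∀ r : ℝ, 0 ≤ (a + (r:ℂ) * c).re := fun r => (Complex.le_def.mp (h r)).1
  have hcre : c.re = 0 := by
    by_contra hc
    have := hre (-(a.re + 1) / c.re)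
    simp [Complex.add_re, Complex.mul_re, hcim] at this
    rw [div_mul_cancel₀] at this
    · linarith
    · exact hc
  exact Complex.ext hcre hcim

lemma coeff_zero (a b b' : ℂ)
    (h : ∀ t : ℂ, 0 ≤ a + (starRingEnd ℂ) t * b' + t * b) : b = 0 := by
  have h1 : b + b' = 0 := by
    apply real_line_zero a
    intro r
    have e : a + (starRingEnd ℂ) (r:ℂ) * b' + (r:ℂ) * b = a + (r:ℂ) * (b + b') := by
      simp [Complex.conj_ofReal]; ring
    rw [← e]; exact h r
  have h2 : Complex.I * (b - b') = 0 := by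
    apply real_line_zero a
    intro r
    have e : a + (starRingEnd ℂ) ((r:ℂ) * Complex.I) * b' + (r:ℂ) * Complex.I * b
        = a + (r:ℂ) * (Complex.I * (b - b')) := by
      rw [map_mul (starRingEnd ℂ)]
      simp [Complex.conj_ofReal, Complex.conj_I]; ring
    rw [← e]; exact h _
  have h3 : b - b' = 0 := by
    rcases mul_eq_zero.mp h2 with h | h
    · exact absurd h Complex.I_ne_zero
    · exact h
  linear_combination h1 / 2 + h3 / 2

lemma quad_zero (B : MatC n) (h : ∀ v : Fin n → ℂ, star v ⬝ᵥ (B *ᵥ v) = 0) :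
    B = 0 := by
  have diag : ∀ i, B i i = 0 := by
    intro i
    have := h (Pi.single i 1)
    simpa [dotProduct, Matrix.mulVec, Pi.single_apply, Finset.mul_sum,
      Finset.sum_ite_eq', mul_ite] using this
  have qform : ∀ (c : ℂ) (i j : Fin n), i ≠ j →
      c * B i j + (starRingEnd ℂ) c * B j i = 0 := by
    intro c i j hij
    have := h (Pi.single i 1 + Pi.single j c)
    have expand : star (Pi.single i 1 + Pi.single j c) ⬝ᵥ
        (B *ᵥ (Pi.single i 1 + Pi.single j c))
        = B i i + c * B i j + (starRingEnd ℂ) c * B j i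
          + (starRingEnd ℂ) c * c * B j j := by
      simp [dotProduct, Matrix.mulVec, Pi.single_apply, Finset.mul_sum,
        Finset.sum_add_distrib, mul_add, add_mul, mul_ite, ite_mul,
        Finset.sum_ite_eq', hij, hij.symm, apply_ite (starRingEnd ℂ)]
      ring
    rw [expand, diag i, diag j] at this
    simpa using this
  ext i j
  by_cases hij : i = j
  · subst hij; simpa using diag i
  · have e1 := qform 1 i j hij
    have e2 := qform Complex.I i j hij
    simp [Complex.conj_I] at e1 e2
    simp only [Matrix.zero_apply]
    linear_combination e1 / 2 - Complex.I / 2 * e2 + (B i j - B j i) / 2 * Complex.I_sq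

/-- Choi's multiplicative-domain theorem (one-sided version). -/
lemma mdl (Φ : Module.End ℂ (MatC n)) (hCP : IsCompletelyPositive Φ)
    (hunit : Φ 1 = 1) (X : MatC n)
    (hXX : Φ (Xᴴ * X) = (Φ X)ᴴ * Φ X) (Y : MatC n) :
    Φ (Yᴴ * X) = (Φ Y)ᴴ * Φ X := by
  have key : ∀ v : Fin n → ℂ,
      star v ⬝ᵥ ((Φ (Yᴴ * X) - (Φ Y)ᴴ * Φ X) *ᵥ v) = 0 := by
    intro v
    apply coeff_zero (star v ⬝ᵥ ((Φ (Yᴴ * Y) - (Φ Y)ᴴ * Φ Y) *ᵥ v))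
      _ (star v ⬝ᵥ ((Φ (Xᴴ * Y) - (Φ X)ᴴ * Φ Y) *ᵥ v))
    intro t
    have h := ks Φ hCP hunit (Y + t • X) v
    have expand : Φ ((Y + t • X)ᴴ * (Y + t • X)) - (Φ (Y + t • X))ᴴ * Φ (Y + t • X)
        = (Φ (Yᴴ * Y) - (Φ Y)ᴴ * Φ Y)
          + (starRingEnd ℂ) t • (Φ (Xᴴ * Y) - (Φ X)ᴴ * Φ Y)
          + t • (Φ (Yᴴ * X) - (Φ Y)ᴴ * Φ X) := by
      simp only [Matrix.conjTranspose_add, Matrix.conjTranspose_smul, mul_add, add_mul,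
        map_add, _root_.map_smul, smul_mul_assoc, mul_smul_comm, smul_smul, hXX,
        ← starRingEnd_apply]
      module
    rw [expand, Matrix.add_mulVec, Matrix.add_mulVec, dotProduct_add,
      dotProduct_add, Matrix.smul_mulVec, Matrix.smul_mulVec,
      dotProduct_smul, dotProduct_smul] at h
    simpa [smul_eq_mul] using h
  exact sub_eq_zero.mp (quad_zero _ key)

lemma pow_unit (Φ : Module.End ℂ (MatC n)) (hunit : Φ 1 = 1) (m : ℕ) :
    (Φ ^ m) 1 = 1 := by
  induction m with
  | zero => simp
  | succ m ih => rw [pow_succ, Module.End.mul_apply, hunit, ih]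

lemma isCP_pow (Φ : Module.End ℂ (MatC n)) (hCP : IsCompletelyPositive Φ) (m : ℕ) :
    IsCompletelyPositive (Φ ^ m) := by
  induction m with
  | zero =>
    intro k M hM
    have e : (Matrix.of fun p q : Fin n × Fin k =>
        ((Φ ^ 0) (Matrix.of fun i j => M (i, p.2) (j, q.2))) p.1 q.1) = M := by
      ext ⟨i, s⟩ ⟨j, t⟩
      simp [pow_zero, Module.End.one_apply]
    rw [e]; exact hM
  | succ m ih =>
    intro k M hM
    have h1 := ih k M hM
    have h2 := hCP k _ h1
    have e : (Matrix.of fun p q : Fin n × Fin k =>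
        ((Φ ^ (m+1)) (Matrix.of fun i j => M (i, p.2) (j, q.2))) p.1 q.1)
        = (Matrix.of fun p q : Fin n × Fin k =>
            Φ (Matrix.of fun i j =>
              (Matrix.of fun p' q' : Fin n × Fin k =>
                ((Φ ^ m) (Matrix.of fun a b => M (a, p'.2) (b, q'.2))) p'.1 q'.1) (i, p.2) (j, q.2)) p.1 q.1) := by
      ext ⟨i, s⟩ ⟨j, t⟩
      simp only [Matrix.of_apply, pow_succ', Module.End.mul_apply]
      rfl
    rw [e]; exact h2

end Auxiliary

/-- The decoherence-free algebra is the largest Φ-invariant *-subalgebra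
on which every power of Φ restricts to a *-homomorphism. -/
theorem decFree_largest {n : ℕ} (Φ : Module.End ℂ (MatC n))
    (hCP : IsCompletelyPositive Φ) (hunit : Φ 1 = 1)
    (M : StarSubalgebra ℂ (MatC n))
    (hinv : ∀ X ∈ M, Φ X ∈ M)
    (hmul : ∀ (m : ℕ), ∀ X ∈ M, ∀ Y ∈ M, (Φ ^ m) (X * Y) = (Φ ^ m) X * (Φ ^ m) Y) :
    (M : Set (MatC n)) ⊆ decFree Φ := by
  intro X hX
  intro m Y
  have hCPm := isCP_pow Φ hCP m
  have hum := pow_unit Φ hunit m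
  have hstar : ∀ A : MatC n, (Φ ^ m) Aᴴ = ((Φ ^ m) A)ᴴ := star_pres _ hCPm
  have hXs : (star X) ∈ M := star_mem hX
  have hXX : (Φ ^ m) (Xᴴ * X) = ((Φ ^ m) X)ᴴ * (Φ ^ m) X := by
    have h := hmul m (star X) hXs X hX
    rw [Matrix.star_eq_conjTranspose] at h
    rw [h, hstar]
  constructor
  · have h := mdl (Φ ^ m) hCPm hum X hXX Yᴴ
    rwa [Matrix.conjTranspose_conjTranspose, hstar, Matrix.conjTranspose_conjTranspose] at h
  · have hXX2 : (Φ ^ m) ((Xᴴ)ᴴ * Xᴴ) = ((Φ ^ m) Xᴴ)ᴴ * (Φ ^ m) Xᴴ := by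
      have h := hmul m X hX (star X) hXs
      rw [Matrix.star_eq_conjTranspose] at h
      rw [Matrix.conjTranspose_conjTranspose, h, hstar, Matrix.conjTranspose_conjTranspose]
    have h2 := mdl (Φ ^ m) hCPm hum Xᴴ hXX2 Y
    have h3 : (Φ ^ m) (X * Y) = ((Φ ^ m) (Yᴴ * Xᴴ))ᴴ := by
      rw [← Matrix.conjTranspose_mul, hstar, Matrix.conjTranspose_conjTranspose]
    rw [h3, h2, Matrix.conjTranspose_mul, Matrix.conjTranspose_conjTranspose, hstar,
      Matrix.conjTranspose_conjTranspose]
end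

section
/- If Φ is a faithful unital completely positive map on B(H), then the restriction of Φ to its decoherence-free algebra N is a *-automorphism of N. -/
open Matrix
open scoped ComplexOrder

/-- Faithfulness: existence of a full-rank stationary state for the
Hilbert-Schmidt adjoint of Φ. -/
def IsFaithful {n : ℕ} (Φ : Module.End ℂ (MatC n)) : Prop :=
  ∃ ρ : MatC n, ρ.PosDef ∧ ρ.trace = 1 ∧ ∀ A : MatC n, (Φ A * ρ).trace = (A * ρ).trace

section Aux

variable {n : ℕ}

lemma dq_conj (M : MatC n) (v : Fin n → ℂ) :
    star v ⬝ᵥ (Mᴴ *ᵥ v) = star (star v ⬝ᵥ (M *ᵥ v)) := by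
  simp only [dotProduct, mulVec, conjTranspose_apply, star_sum, star_mul', Pi.star_apply,
    star_star, Finset.mul_sum, Finset.sum_mul]
  rw [Finset.sum_comm]
  congr 1; ext i; congr 1; ext j; ring

lemma quadform_zero {T : MatC n} (h : ∀ v : Fin n → ℂ, star v ⬝ᵥ (T *ᵥ v) = 0) : T = 0 := by
  have h2 : ∀ x : EuclideanSpace ℂ (Fin n), inner ℂ (Matrix.toEuclideanLin T x) x = (0 : ℂ) := by
    intro x
    have hx := h ((WithLp.equiv 2 _) x)
    have : (inner ℂ (Matrix.toEuclideanLin T x) x : ℂ) =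
        star (star ((WithLp.equiv 2 _) x) ⬝ᵥ (T *ᵥ (WithLp.equiv 2 _) x)) := by
      simp [PiLp.inner_apply, dotProduct, Matrix.toEuclideanLin_apply, star_sum, mul_comm]
    rw [this, hx, star_zero]
  have := (inner_map_self_eq_zero (Matrix.toEuclideanLin T)).mp h2
  exact Matrix.toEuclideanLin.map_eq_zero_iff.mp this

lemma trace_selfadj_zero {F : MatC n} (h : (Fᴴ * F).trace = 0) : F = 0 := by
  have h0 : ∀ j ∈ Finset.univ, (0:ℂ) ≤ (Fᴴ * F).diag j := fun j _ => by
    simp only [Matrix.diag_apply, Matrix.mul_apply, conjTranspose_apply]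
    exact Finset.sum_nonneg fun i _ => star_mul_self_nonneg _
  have := (Finset.sum_eq_zero_iff_of_nonneg h0).mp h
  ext i j
  have hj := this j (Finset.mem_univ j)
  simp only [Matrix.diag_apply, Matrix.mul_apply, conjTranspose_apply] at hj
  have h0' : ∀ i ∈ Finset.univ, (0:ℂ) ≤ star (F i j) * F i j := fun i _ => star_mul_self_nonneg _
  have := (Finset.sum_eq_zero_iff_of_nonneg h0').mp hj i (Finset.mem_univ i)
  rw [Complex.star_def, ← Complex.normSq_eq_conj_mul_self] at this
  exact_mod_cast Complex.normSq_eq_zero.mp (by exact_mod_cast this)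

open scoped MatrixOrder in
lemma psd_trace_zero {D ρ : MatC n} (hD : D.PosSemidef) (hρ : ρ.PosDef)
    (h : (D * ρ).trace = 0) : D = 0 := by
  obtain ⟨C, hC⟩ := CStarAlgebra.nonneg_iff_eq_star_mul_self.mp hD.nonneg
  rw [hC] at h
  set E := CFC.sqrt ρ with hE
  have hEherm : Eᴴ = E := (CFC.sqrt_nonneg ρ).posSemidef.isHermitian
  have hEE : E * E = ρ := CFC.sqrt_mul_sqrt_self ρ hρ.posSemidef.nonneg
  have key : ((C * E)ᴴ * (C * E)).trace = 0 := by
    have h1 : (C * E)ᴴ * (C * E) = E * (Cᴴ * C) * E := by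
      rw [Matrix.conjTranspose_mul, hEherm]; noncomm_ring
    rw [h1, Matrix.trace_mul_cycle, Matrix.trace_mul_comm, hEE]
    exact h
  have hCE : C * E = 0 := trace_selfadj_zero key
  have hEunit : IsUnit E.det := by
    have hdet : ρ.det = E.det * E.det := by rw [← hEE, Matrix.det_mul]
    have : ρ.det ≠ 0 := ne_of_gt hρ.det_pos
    refine isUnit_iff_ne_zero.mpr fun h0 => this (by rw [hdet, h0, mul_zero])
  have hC0 : C = 0 := by
    have := congrArg (fun M => M * E⁻¹) hCE
    simpa [Matrix.mul_assoc, Matrix.mul_nonsing_inv E hEunit] using this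
  rw [hC, hC0]; simp

/-- amplification -/
def amp (Φ : Module.End ℂ (MatC n)) (k : ℕ) (M : Matrix (Fin n × Fin k) (Fin n × Fin k) ℂ) :
    Matrix (Fin n × Fin k) (Fin n × Fin k) ℂ :=
  Matrix.of fun p q : Fin n × Fin k =>
      Φ (Matrix.of fun i j => M (i, p.2) (j, q.2)) p.1 q.1

lemma isCP_iff (Φ : Module.End ℂ (MatC n)) :
    IsCompletelyPositive Φ ↔ ∀ (k : ℕ) (M : Matrix (Fin n × Fin k) (Fin n × Fin k) ℂ),
      M.PosSemidef → (amp Φ k M).PosSemidef := Iff.rfl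

lemma amp_mul (Φ Ψ : Module.End ℂ (MatC n)) (k : ℕ) (M : Matrix (Fin n × Fin k) (Fin n × Fin k) ℂ) :
    amp (Φ * Ψ) k M = amp Φ k (amp Ψ k M) := by
  ext p q
  have h : (Matrix.of fun i j => amp Ψ k M (i, p.2) (j, q.2))
      = Ψ (Matrix.of fun i j => M (i, p.2) (j, q.2)) := by
    ext i j; simp [amp]
  simp only [amp, Matrix.of_apply, Module.End.mul_apply, h]
  rfl

lemma amp_one (k : ℕ) (M : Matrix (Fin n × Fin k) (Fin n × Fin k) ℂ) :
    amp (1 : Module.End ℂ (MatC n)) k M = M := by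
  ext p q; simp [amp]

lemma cp_pow {Φ : Module.End ℂ (MatC n)} (hΦ : IsCompletelyPositive Φ) (m : ℕ) :
    IsCompletelyPositive (Φ ^ m) := by
  induction m with
  | zero => intro k M hM; rw [pow_zero]; show (amp 1 k M).PosSemidef; rwa [amp_one]
  | succ m ih =>
      intro k M hM
      rw [pow_succ']
      show ((amp (Φ * Φ ^ m) k M)).PosSemidef
      rw [amp_mul]
      exact hΦ k _ (ih k M hM)

lemma pow_unital {Φ : Module.End ℂ (MatC n)} (hu : Φ 1 = 1) (m : ℕ) : (Φ ^ m) 1 = 1 := by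
  induction m with
  | zero => simp
  | succ m ih => rw [pow_succ, Module.End.mul_apply, hu, ih]

lemma posMap {Φ : Module.End ℂ (MatC n)} (hΦ : IsCompletelyPositive Φ) {A : MatC n}
    (hA : A.PosSemidef) : (Φ A).PosSemidef := by
  have hM : (A.submatrix (Prod.fst : Fin n × Fin 1 → Fin n) Prod.fst).PosSemidef :=
    hA.submatrix _
  have h1 := hΦ 1 _ hM
  have h2 : (Matrix.of fun p q : Fin n × Fin 1 =>
      Φ (Matrix.of fun i j => (A.submatrix Prod.fst Prod.fst) (i, p.2) (j, q.2)) p.1 q.1)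
      = (Φ A).submatrix (Prod.fst : Fin n × Fin 1 → Fin n) Prod.fst := by
    ext p q
    have h : (Matrix.of fun i j => (A.submatrix Prod.fst Prod.fst) (i, p.2) (j, q.2)) = A := by
      ext i j; simp
    simp [h]
    rfl
  rw [h2] at h1
  have := h1.submatrix (fun i : Fin n => ((i, 0) : Fin n × Fin 1))
  exact this

lemma isHermitian_decomp {H : MatC n} (hH : H.IsHermitian) :
    ∃ P Q : MatC n, P.PosSemidef ∧ Q.PosSemidef ∧ H = P - Q := by
  let U : MatC n := hH.eigenvectorUnitary
  let dp : Fin n → ℂ := fun i => (max (hH.eigenvalues i) 0 : ℝ)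
  let dm : Fin n → ℂ := fun i => (max (-hH.eigenvalues i) 0 : ℝ)
  refine ⟨U * Matrix.diagonal dp * Uᴴ, U * Matrix.diagonal dm * Uᴴ, ?_, ?_, ?_⟩
  · exact (Matrix.PosSemidef.diagonal (fun i =>
      Complex.zero_le_real.mpr (le_max_right _ _))).mul_mul_conjTranspose_same U
  · exact (Matrix.PosSemidef.diagonal (fun i =>
      Complex.zero_le_real.mpr (le_max_right _ _))).mul_mul_conjTranspose_same U
  · have hfun : (fun i => dp i - dm i) = (RCLike.ofReal ∘ hH.eigenvalues) := by
      funext i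
      show ((max (hH.eigenvalues i) 0 : ℝ) : ℂ) - ((max (-hH.eigenvalues i) 0 : ℝ) : ℂ)
          = ((hH.eigenvalues i : ℝ) : ℂ)
      rw [← Complex.ofReal_sub]
      congr 1
      rcases le_or_gt 0 (hH.eigenvalues i) with h | h
      · rw [max_eq_left h, max_eq_right (by linarith)]; ring
      · rw [max_eq_right (le_of_lt h), max_eq_left (by linarith)]; ring
    have hd : Matrix.diagonal dp - Matrix.diagonal dm
        = Matrix.diagonal (RCLike.ofReal ∘ hH.eigenvalues) := by
      rw [Matrix.diagonal_sub, hfun]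
    calc H = U * Matrix.diagonal (RCLike.ofReal ∘ hH.eigenvalues) * Uᴴ := by
            have := hH.spectral_theorem
            simpa [U, Matrix.star_eq_conjTranspose] using this
      _ = U * Matrix.diagonal dp * Uᴴ - U * Matrix.diagonal dm * Uᴴ := by
            rw [← hd]; noncomm_ring

lemma hermMap {Φ : Module.End ℂ (MatC n)} (hΦ : IsCompletelyPositive Φ) (A : MatC n) :
    Φ Aᴴ = (Φ A)ᴴ := by
  have hherm : ∀ H : MatC n, H.IsHermitian → (Φ H).IsHermitian := by
    intro H hH
    obtain ⟨P, Q, hP, hQ, hPQ⟩ := isHermitian_decomp hH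
    rw [hPQ, map_sub]
    exact ((posMap hΦ hP).isHermitian).sub ((posMap hΦ hQ).isHermitian)
  have h1 : ((2:ℂ)⁻¹ • (A + Aᴴ)).IsHermitian := by
    rw [Matrix.IsHermitian, Matrix.conjTranspose_smul]
    simp [Matrix.conjTranspose_add, add_comm]
  have h2 : (((-Complex.I) * 2⁻¹) • (A - Aᴴ)).IsHermitian := by
    rw [Matrix.IsHermitian, Matrix.conjTranspose_smul, Matrix.conjTranspose_sub,
      Matrix.conjTranspose_conjTranspose]
    rw [show (star ((-Complex.I) * 2⁻¹) : ℂ) = -((-Complex.I) * 2⁻¹) by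
      simp [Complex.ext_iff]]
    rw [neg_smul, ← smul_neg, neg_sub]
  have key : ∀ H1 H2 : MatC n, H1.IsHermitian → H2.IsHermitian →
      A = H1 + Complex.I • H2 → Aᴴ = H1 - Complex.I • H2 → Φ Aᴴ = (Φ A)ᴴ := by
    intro H1 H2 hh1 hh2 hA hAH
    rw [hAH, map_sub, _root_.map_smul, hA, map_add, _root_.map_smul,
      Matrix.conjTranspose_add, Matrix.conjTranspose_smul, hherm _ hh1, hherm _ hh2,
      show (star Complex.I : ℂ) = -Complex.I by simp [Complex.ext_iff],
      neg_smul, ← sub_eq_add_neg]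
  refine key _ _ h1 h2 ?_ ?_
  · rw [smul_smul]; match_scalars <;> simp [Complex.ext_iff] <;> norm_num
  · rw [smul_smul]; match_scalars <;> simp [Complex.ext_iff] <;> norm_num

lemma schwarz {Φ : Module.End ℂ (MatC n)} (hΦ : IsCompletelyPositive Φ) (hu : Φ 1 = 1)
    (A : MatC n) : (Φ (Aᴴ * A) - (Φ A)ᴴ * Φ A).PosSemidef := by
  classical
  let B : Fin 2 → MatC n := ![A, 1]
  let V : Matrix (Fin n) (Fin n × Fin 2) ℂ := Matrix.of fun i p => B p.2 i p.1
  let M := Vᴴ * V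
  have hblock : ∀ (a b : Fin 2), (Matrix.of fun i j => M (i, a) (j, b)) = (B a)ᴴ * B b := by
    intro a b
    ext i j
    simp [M, V, Matrix.mul_apply, Matrix.conjTranspose_apply]
  have hN := hΦ 2 M (Matrix.posSemidef_conjTranspose_mul_self V)
  have hNapp : ∀ (i j : Fin n) (a b : Fin 2),
      (Matrix.of fun p q : Fin n × Fin 2 =>
        Φ (Matrix.of fun i j => M (i, p.2) (j, q.2)) p.1 q.1) (i, a) (j, b)
      = Φ ((B a)ᴴ * B b) i j := by
    intro i j a b
    simp [hblock]
  refine Matrix.PosSemidef.of_dotProduct_mulVec_nonneg ?_ ?_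
  · have hherm : (Φ (Aᴴ * A)).IsHermitian := by
      have : (Φ (Aᴴ * A))ᴴ = Φ ((Aᴴ * A)ᴴ) := (hermMap hΦ _).symm
      rw [Matrix.IsHermitian, this, Matrix.conjTranspose_mul, Matrix.conjTranspose_conjTranspose]
    exact hherm.sub (Matrix.isHermitian_conjTranspose_mul_self _)
  · intro v
    set u : Fin n → ℂ := (Φ A) *ᵥ v with hu'
    let w : Fin n × Fin 2 → ℂ := fun p => if p.2 = 0 then v p.1 else -u p.1
    have h0 := hN.dotProduct_mulVec_nonneg w
    set N : Matrix (Fin n × Fin 2) (Fin n × Fin 2) ℂ := Matrix.of fun p q : Fin n × Fin 2 =>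
        Φ (Matrix.of fun i j => M (i, p.2) (j, q.2)) p.1 q.1 with hNdef
    let e : (Fin n ⊕ Fin n) ≃ (Fin n × Fin 2) :=
      { toFun := Sum.elim (fun i => (i, 0)) (fun i => (i, 1))
        invFun := fun p => if p.2 = 0 then Sum.inl p.1 else Sum.inr p.1
        left_inv := by rintro (i | i) <;> simp
        right_inv := by rintro ⟨i, a⟩; fin_cases a <;> simp }
    have hsub : N.submatrix e e
        = Matrix.fromBlocks (Φ (Aᴴ * A)) ((Φ A)ᴴ) (Φ A) 1 := by
      have hP : ∀ a b : Fin 2, (Matrix.of fun i j => N (i, a) (j, b)) = Φ ((B a)ᴴ * B b) := by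
        intro a b; ext i j; simp [hNdef, hblock]
      have h00 := hP 0 0; have h01 := hP 0 1; have h10 := hP 1 0; have h11 := hP 1 1
      simp only [B, Matrix.cons_val_zero, Matrix.cons_val_one, Matrix.head_cons,
        Matrix.conjTranspose_one, one_mul, mul_one, hu, hermMap hΦ] at h00 h01 h10 h11
      ext (i | i) (j | j)
      · simpa [e] using congrFun (congrFun h00 i) j
      · simpa [e] using congrFun (congrFun h01 i) j
      · simpa [e] using congrFun (congrFun h10 i) j
      · simpa [e] using congrFun (congrFun h11 i) j
    have hwe : w ∘ e = Sum.elim v (-u) := by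
      funext s; rcases s with i | i <;> simp [w, e]
    have hdot : star w ⬝ᵥ (N *ᵥ w) = (star w ∘ e) ⬝ᵥ ((N *ᵥ w) ∘ e) := by
      simp only [dotProduct, Function.comp_apply]
      exact (Equiv.sum_comp e fun p => star (w p) * (N *ᵥ w) p).symm
    have hmv : (N *ᵥ w) ∘ e = (N.submatrix e e) *ᵥ (w ∘ e) := by
      have hcomp : (w ∘ ⇑e) ∘ ⇑e.symm = w := by funext q; simp
      rw [Matrix.submatrix_mulVec_equiv, hcomp]
    have hsw : star w ∘ e = Sum.elim (star v) (star (-u)) := by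
      funext s; rcases s with i | i <;> simp [w, e]
    rw [hdot, hmv, hsub, hwe, hsw, Matrix.fromBlocks_mulVec] at h0
    simp only [Sum.elim_comp_inl, Sum.elim_comp_inr, Matrix.mulVec_neg, Matrix.one_mulVec,
      sumElim_dotProduct_sumElim, star_neg, neg_dotProduct, dotProduct_neg,
      dotProduct_add, neg_neg] at h0
    rw [show (Φ A *ᵥ v) = u from rfl] at h0
    have hcancel : star v ⬝ᵥ (Φ (Aᴴ * A) *ᵥ v) + -(star v ⬝ᵥ ((Φ A)ᴴ *ᵥ u)) +
        (-(star u ⬝ᵥ u) + star u ⬝ᵥ u)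
        = star v ⬝ᵥ ((Φ (Aᴴ * A) - (Φ A)ᴴ * Φ A) *ᵥ v) := by
      rw [hu', Matrix.mulVec_mulVec, Matrix.sub_mulVec, dotProduct_sub]
      ring
    rw [← hcancel]
    convert h0 using 1

lemma scalar_zero {t e : ℂ} (he : 0 ≤ e)
    (h : ∀ c : ℂ, 0 ≤ star c * t + c * star t + (c * star c) * e) : t = 0 := by
  by_contra ht
  have hnst : 0 < Complex.normSq t := Complex.normSq_pos.mpr ht
  have her1 : 0 ≤ e.re := by rw [Complex.le_def] at he; simpa using he.1
  have her2 : e.im = 0 := by rw [Complex.le_def] at he; simpa using he.2.symm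
  have hee : e = ((e.re : ℝ) : ℂ) := by apply Complex.ext <;> simp [her2]
  set s : ℝ := 1 / (e.re + 1) with hs
  have hspos : 0 < s := by positivity
  have hstar : star (-(s:ℂ) * t) = -(s:ℂ) * star t := by
    simp [Complex.star_def, Complex.conj_ofReal]
  have h2 := h (-(s:ℂ) * t)
  have hkey : star (-(s:ℂ) * t) * t + (-(s:ℂ) * t) * star t + ((-(s:ℂ) * t) * star (-(s:ℂ) * t)) * e
      = ((Complex.normSq t : ℝ) : ℂ) * (-2 * (s:ℂ) + (s:ℂ) ^ 2 * e) := by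
    rw [hstar, ← Complex.mul_conj t]
    show _ = _ * _
    rw [show (starRingEnd ℂ) t = star t from rfl]
    ring
  rw [hkey, hee] at h2
  have hcast : ((Complex.normSq t * (-2 * s + s ^ 2 * e.re) : ℝ) : ℂ)
      = ((Complex.normSq t : ℝ) : ℂ) * (-2 * (s:ℂ) + (s:ℂ) ^ 2 * ((e.re : ℝ) : ℂ)) := by
    push_cast; ring
  rw [← hcast] at h2
  have hreal : (0:ℝ) ≤ Complex.normSq t * (-2 * s + s ^ 2 * e.re) := Complex.zero_le_real.mp h2
  have h3 : s * e.re ≤ 1 := by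
    rw [hs, one_div, inv_mul_eq_div, div_le_one (by linarith)]; linarith
  nlinarith [mul_pos hnst hspos, mul_nonneg (le_of_lt hspos) her1]

lemma mult_domain {Ψ : Module.End ℂ (MatC n)}
    (hS : ∀ A : MatC n, (Ψ (Aᴴ * A) - (Ψ A)ᴴ * Ψ A).PosSemidef)
    (hH : ∀ A : MatC n, Ψ Aᴴ = (Ψ A)ᴴ)
    {X : MatC n} (hX : Ψ (Xᴴ * X) = (Ψ X)ᴴ * Ψ X) (Y : MatC n) :
    Ψ (Yᴴ * X) = (Ψ Y)ᴴ * Ψ X := by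
  set T := Ψ (Yᴴ * X) - (Ψ Y)ᴴ * Ψ X with hT
  set E := Ψ (Yᴴ * Y) - (Ψ Y)ᴴ * Ψ Y with hE
  have hTH : Ψ (Xᴴ * Y) - (Ψ X)ᴴ * Ψ Y = Tᴴ := by
    rw [hT, Matrix.conjTranspose_sub, Matrix.conjTranspose_mul,
      Matrix.conjTranspose_conjTranspose, ← hH (Yᴴ * X), Matrix.conjTranspose_mul,
      Matrix.conjTranspose_conjTranspose]
  have key : ∀ c : ℂ, ((star c) • T + c • Tᴴ + (c * star c) • E).PosSemidef := by
    intro c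
    have h1 := hS (X + c • Y)
    have hexp : Ψ ((X + c • Y)ᴴ * (X + c • Y)) - (Ψ (X + c • Y))ᴴ * Ψ (X + c • Y)
        = (star c) • T + c • Tᴴ + (c * star c) • E := by
      rw [← hTH, hT, hE]
      simp only [Matrix.conjTranspose_add, Matrix.conjTranspose_smul, add_mul, mul_add,
        map_add, _root_.map_smul, smul_mul_assoc, mul_smul_comm, smul_smul, hX]
      module
    rw [hexp] at h1
    exact h1
  have hTzero : T = 0 := by
    apply quadform_zero
    intro v
    refine scalar_zero (e := star v ⬝ᵥ (E *ᵥ v)) ((hS Y).dotProduct_mulVec_nonneg v) ?_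
    intro c
    have h2 := (key c).dotProduct_mulVec_nonneg v
    have hexpand : star v ⬝ᵥ (((star c) • T + c • Tᴴ + (c * star c) • E) *ᵥ v)
        = star c * (star v ⬝ᵥ (T *ᵥ v)) + c * star (star v ⬝ᵥ (T *ᵥ v))
          + (c * star c) * (star v ⬝ᵥ (E *ᵥ v)) := by
      rw [Matrix.add_mulVec, Matrix.add_mulVec, dotProduct_add, dotProduct_add]
      rw [Matrix.smul_mulVec, Matrix.smul_mulVec, Matrix.smul_mulVec]
      rw [dotProduct_smul, dotProduct_smul, dotProduct_smul, dq_conj]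
      simp [smul_eq_mul]
    rwa [hexpand] at h2
  exact sub_eq_zero.mp hTzero

end Aux

/-- For a faithful UCP map, the restriction of Φ to its decoherence-free algebra
is a *-automorphism: a multiplicative, star-preserving bijection of N onto itself. -/
theorem decFree_restriction_automorphism {n : ℕ} (Φ : Module.End ℂ (MatC n))
    (hCP : IsCompletelyPositive Φ) (hunit : Φ 1 = 1) (hfaith : IsFaithful Φ) :
    Set.BijOn (fun X => Φ X) (decFree Φ) (decFree Φ) ∧
      (∀ X ∈ decFree Φ, ∀ Y ∈ decFree Φ, Φ (X * Y) = Φ X * Φ Y) ∧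
      (∀ X ∈ decFree Φ, Φ Xᴴ = (Φ X)ᴴ) := by
  classical
  obtain ⟨ρ, hρ, hρtr, hinvtr⟩ := hfaith
  have hCPm : ∀ m, IsCompletelyPositive (Φ ^ m) := cp_pow hCP
  have hum : ∀ m, (Φ ^ m) 1 = 1 := pow_unital hunit
  have hHm : ∀ m (A : MatC n), (Φ ^ m) Aᴴ = ((Φ ^ m) A)ᴴ := fun m => hermMap (hCPm m)
  have hSm : ∀ m (A : MatC n), ((Φ ^ m) (Aᴴ * A) - ((Φ ^ m) A)ᴴ * (Φ ^ m) A).PosSemidef :=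
    fun m => schwarz (hCPm m) (hum m)
  have htrm : ∀ m (A : MatC n), ((Φ ^ m) A * ρ).trace = (A * ρ).trace := by
    intro m
    induction m with
    | zero => intro A; simp
    | succ m ih =>
        intro A
        rw [pow_succ, Module.End.mul_apply, ih (Φ A), hinvtr A]
  have eqcase : ∀ m (X : MatC n),
      (((Φ ^ m) X)ᴴ * ((Φ ^ m) X) * ρ).trace = (Xᴴ * X * ρ).trace →
      (Φ ^ m) (Xᴴ * X) = ((Φ ^ m) X)ᴴ * (Φ ^ m) X := by
    intro m X hg
    have hD := hSm m X
    have htr0 : (((Φ ^ m) (Xᴴ * X) - ((Φ ^ m) X)ᴴ * (Φ ^ m) X) * ρ).trace = 0 := by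
      rw [Matrix.sub_mul, Matrix.trace_sub, htrm m (Xᴴ * X), hg, sub_self]
    exact sub_eq_zero.mp (psd_trace_zero hD hρ htr0)
  have gdef : ∀ X : MatC n, (Xᴴ * X * ρ).trace = 0 → X = 0 := by
    intro X h
    have := psd_trace_zero (Matrix.posSemidef_conjTranspose_mul_self X) hρ h
    exact trace_selfadj_zero (by rw [this, Matrix.trace_zero])
  have gfwd : ∀ X ∈ decFree Φ, ∀ m,
      (((Φ ^ m) X)ᴴ * ((Φ ^ m) X) * ρ).trace = (Xᴴ * X * ρ).trace ∧
      (((Φ ^ m) Xᴴ)ᴴ * ((Φ ^ m) Xᴴ) * ρ).trace = ((Xᴴ)ᴴ * Xᴴ * ρ).trace := by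
    intro X hX m
    have h1 := (hX m Xᴴ).1
    have h2 := (hX m Xᴴ).2
    constructor
    · rw [← hHm m X, ← h1, htrm m]
    · rw [show ((Φ ^ m) Xᴴ)ᴴ = (Φ ^ m) X by
          rw [← hHm m Xᴴ, Matrix.conjTranspose_conjTranspose], ← h2, htrm m,
        Matrix.conjTranspose_conjTranspose]
  have gbwd : ∀ X : MatC n,
      (∀ m, (((Φ ^ m) X)ᴴ * ((Φ ^ m) X) * ρ).trace = (Xᴴ * X * ρ).trace ∧
        (((Φ ^ m) Xᴴ)ᴴ * ((Φ ^ m) Xᴴ) * ρ).trace = ((Xᴴ)ᴴ * Xᴴ * ρ).trace) →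
      X ∈ decFree Φ := by
    intro X hg m Y
    have c1 : (Φ ^ m) (Xᴴ * X) = ((Φ ^ m) X)ᴴ * (Φ ^ m) X := eqcase m X (hg m).1
    have c2 : (Φ ^ m) (Xᴴᴴ * Xᴴ) = ((Φ ^ m) Xᴴ)ᴴ * (Φ ^ m) Xᴴ := eqcase m Xᴴ (hg m).2
    have left : ∀ Z : MatC n, (Φ ^ m) (Z * X) = (Φ ^ m) Z * (Φ ^ m) X := by
      intro Z
      have h := mult_domain (hSm m) (hHm m) c1 Zᴴ
      rw [Matrix.conjTranspose_conjTranspose] at h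
      rw [h, hHm m Z, Matrix.conjTranspose_conjTranspose]
    have rightX : ∀ Z : MatC n, (Φ ^ m) (Z * Xᴴ) = (Φ ^ m) Z * (Φ ^ m) Xᴴ := by
      intro Z
      have h := mult_domain (hSm m) (hHm m) c2 Zᴴ
      rw [Matrix.conjTranspose_conjTranspose] at h
      rw [h, hHm m Z, Matrix.conjTranspose_conjTranspose]
    have right : ∀ Z : MatC n, (Φ ^ m) (X * Z) = (Φ ^ m) X * (Φ ^ m) Z := by
      intro Z
      have h := congrArg Matrix.conjTranspose (rightX Zᴴ)
      rw [← hHm m (Zᴴ * Xᴴ), Matrix.conjTranspose_mul, Matrix.conjTranspose_conjTranspose,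
        Matrix.conjTranspose_conjTranspose, Matrix.conjTranspose_mul, ← hHm m,
        Matrix.conjTranspose_conjTranspose, ← hHm m Zᴴ, Matrix.conjTranspose_conjTranspose] at h
      exact h
    exact ⟨left Y, right Y⟩
  let S : Submodule ℂ (MatC n) :=
    { carrier := decFree Φ
      add_mem' := by
        intro a b ha hb m Y
        refine ⟨?_, ?_⟩
        · rw [mul_add, map_add, map_add, (ha m Y).1, (hb m Y).1, mul_add]
        · rw [add_mul, map_add, map_add, (ha m Y).2, (hb m Y).2, add_mul]
      zero_mem' := by intro m Y; simp
      smul_mem' := by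
        intro c X hX m Y
        refine ⟨?_, ?_⟩
        · rw [mul_smul_comm, _root_.map_smul, _root_.map_smul, (hX m Y).1, mul_smul_comm]
        · rw [smul_mul_assoc, _root_.map_smul, _root_.map_smul, (hX m Y).2, smul_mul_assoc] }
  have hmaps : Set.MapsTo (fun X => Φ X) (decFree Φ) (decFree Φ) := by
    intro X hX
    apply gbwd
    intro m
    have hfor := gfwd X hX
    have e1 : (Φ ^ m) (Φ X) = (Φ ^ (m + 1)) X := by rw [pow_succ, Module.End.mul_apply]
    constructor
    · rw [e1, (hfor (m + 1)).1, ← (hfor 1).1, pow_one]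
    · have e2 : (Φ X)ᴴ = Φ Xᴴ := (hermMap hCP X).symm
      rw [e2]
      have e3 : (Φ ^ m) (Φ Xᴴ) = (Φ ^ (m + 1)) Xᴴ := by rw [pow_succ, Module.End.mul_apply]
      rw [e3, (hfor (m + 1)).2, ← (hfor 1).2, pow_one]
  have hinj : Set.InjOn (fun X => Φ X) (decFree Φ) := by
    intro X hX Y hY hXY
    have hZmem : X - Y ∈ decFree Φ := S.sub_mem hX hY
    have hZ0 : Φ (X - Y) = 0 := by rw [map_sub, sub_eq_zero]; exact hXY
    have hg := (gfwd _ hZmem 1).1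
    rw [pow_one, hZ0] at hg
    simp only [Matrix.conjTranspose_zero, Matrix.zero_mul, Matrix.trace_zero] at hg
    exact sub_eq_zero.mp (gdef (X - Y) hg.symm)
  have hLmaps : ∀ x ∈ S, Φ x ∈ S := fun x hx => hmaps hx
  let L : S →ₗ[ℂ] S := Φ.restrict hLmaps
  have hLinj : Function.Injective L := by
    intro a b hab
    exact Subtype.ext (hinj a.2 b.2 (congrArg Subtype.val hab))
  have hLsurj : Function.Surjective L := (LinearMap.injective_iff_surjective).mp hLinj
  have hsurj : Set.SurjOn (fun X => Φ X) (decFree Φ) (decFree Φ) := by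
    intro Y hY
    obtain ⟨Z, hZ⟩ := hLsurj ⟨Y, hY⟩
    exact ⟨Z.1, Z.2, congrArg Subtype.val hZ⟩
  refine ⟨⟨hmaps, hinj, hsurj⟩, ?_, ?_⟩
  · intro X hX Y hY
    have := (hX 1 Y).2
    rwa [pow_one] at this
  · intro X _
    exact hermMap hCP X
end
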